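/- Let A be a Banach algebra with a right identity e, and let d : A → A be a Jordan derivation. Then the right annihilator ran(A) is invariant under d, i.e., for every r ∈ ran(A) one has d(r) ∈ ran(A). -/
import Mathlib


/-- Let `A` be a complex Banach algebra with a right identity `e`, and let
`d : A → A` be a Jordan derivation.  Then the right annihilator
`ran(A) = {x | ∀ a, a * x = 0}` is invariant under `d`: for every `r ∈ ran(A)`,
`d r ∈ ran(A)`. -/
theorem jordanDerivation_rightAnnihilator_invariant
    {A : Type*} [NonUnitalNormedRing A] [NormedSpace ℂ A]
    [IsScalarTower ℂ A A] [SMulCommClass ℂ A A] [CompleteSpace A]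
    (e : A) (he : ∀ a : A, a * e = a)
    (d : A →ₗ[ℂ] A) (hd : ∀ a : A, d (a * a) = d a * a + a * d a)
    (r : A) (hr : ∀ a : A, a * r = 0) :
    ∀ a : A, a * d r = 0 := by
  intro a
  -- from d(e*e) = d e
  have h0 : d e = d e * e + e * d e := by
    have := hd e; rwa [he e] at this
  have h1 : a * d e = 0 := by
    have h := congrArg (a * ·) h0
    simp only [mul_add, ← mul_assoc, he] at h
    exact (left_eq_add.mp h)
  -- (e+r)² = e + r
  have h2 : (e + r) * (e + r) = e + r := by
    rw [add_mul, mul_add, mul_add, he, he, hr, hr, add_zero, add_zero]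
  have h3 : d e + d r = (d e + d r) * (e + r) + (e + r) * (d e + d r) := by
    have := hd (e + r); rw [h2, map_add] at this; exact this
  have h4 : a * (d e + d r) = 0 := by
    have h := congrArg (a * ·) h3
    simp only [mul_add, ← mul_assoc, he, hr, zero_mul, add_zero, zero_add] at h
    rw [mul_add]
    exact (left_eq_add.mp h)
  rw [mul_add, h1, zero_add] at h4
  exact h4
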